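/- In the heterogeneous acceptance model with spine length m ≥ 1, branch widths w_0, …, w_{m−1}, spine acceptance rate p_s and branch acceptance rate p_t, the expected yield satisfies E[τ] ≥ Σ_{i=1}^{m} p_s^i + 1, with equality when w_i = 0 for all i; that is, the spine tree's expected yield is at least the expected yield of the standalone context-matched chain of the same spine length (the context-matching half of Proposition 4, Non-Degradation Guarantee). -/

import Mathlib

open MeasureTheory ProbabilityTheory

/-- Initial all-success run length of the finite `Bool`-valued sequence
`X 0, …, X (n-1)`: the largest `l ∈ {0,…,n}` with `X 0 = ⋯ = X (l-1) = true`. -/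
def runLen (X : ℕ → Bool) (n : ℕ) : ℕ :=
  Nat.findGreatest (fun l => ∀ i < l, X i = true) n

/-- Yield of one verification cycle of the spine tree: with spine run length
`L = runLen S m`, the yield is `L + 1` if `L = m`, and otherwise
`L + 1 + 1{∃ j < w L, B L j = 1} · (1 + runLen (C L) (D-1))`. -/
def tau (m D : ℕ) (w : ℕ → ℕ) (S : ℕ → Ω → Bool) (B C : ℕ → ℕ → Ω → Bool)
    (ω : Ω) : ℕ :=
  let L := runLen (fun i => S i ω) m
  if L = m then L + 1
  else L + 1 + (if ∃ j < w L, B L j ω = true then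
      1 + runLen (fun k => C L k ω) (D - 1) else 0)

lemma runLen_le (X : ℕ → Bool) (n : ℕ) : runLen X n ≤ n :=
  Nat.findGreatest_le n

lemma runLen_spec (X : ℕ → Bool) (n : ℕ) : ∀ i < runLen X n, X i = true :=
  Nat.findGreatest_spec (P := fun l => ∀ i < l, X i = true) (Nat.zero_le n)
    (by intro i hi; omega)

lemma le_runLen {X : ℕ → Bool} {n l : ℕ} (hl : l ≤ n) (h : ∀ i < l, X i = true) :
    l ≤ runLen X n :=
  Nat.le_findGreatest hl h

lemma le_runLen_iff {X : ℕ → Bool} {n l : ℕ} (hl : l ≤ n) :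
    l ≤ runLen X n ↔ ∀ i < l, X i = true :=
  ⟨fun h i hi => runLen_spec X n i (lt_of_lt_of_le hi h), le_runLen hl⟩

lemma runLen_congr {X Y : ℕ → Bool} {n : ℕ} (h : ∀ i < n, X i = Y i) :
    runLen X n = runLen Y n := by
  have h1 : ∀ {X Y : ℕ → Bool}, (∀ i < n, X i = Y i) → runLen X n ≤ runLen Y n := by
    intro X Y h
    refine le_runLen (runLen_le X n) (fun i hi => ?_)
    rw [← h i (lt_of_lt_of_le hi (runLen_le X n))]
    exact runLen_spec X n i hi
  exact le_antisymm (h1 h) (h1 fun i hi => (h i hi).symm)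

lemma measurable_runLen {Ω : Type*} [MeasurableSpace Ω] {X : ℕ → Ω → Bool}
    (hX : ∀ i, Measurable (X i)) (n : ℕ) :
    Measurable fun ω => runLen (fun i => X i ω) n := by
  have : (fun ω => runLen (fun i => X i ω) n) =
      (fun v : Fin n → Bool => runLen (fun i => if h : i < n then v ⟨i, h⟩ else true) n) ∘
        (fun ω (i : Fin n) => X i ω) := by
    funext ω
    exact runLen_congr (fun i hi => by simp [hi])
  rw [this]
  exact (measurable_of_finite _).comp (measurable_pi_lambda _ fun i => hX i)

/-- Context-matching half of Proposition 4 (Non-Degradation Guarantee): in the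
heterogeneous acceptance model, the spine tree's expected yield satisfies
`E[τ] ≥ ∑_{i=1}^{m} p_s^i + 1`, with equality when all branch widths vanish;
i.e. it is at least the expected yield of the standalone context-matched chain. -/
theorem spine_tree_non_degradation {Ω : Type*} [MeasurableSpace Ω] (μ : Measure Ω)
    [IsProbabilityMeasure μ] (m D : ℕ) (hm : 1 ≤ m) (hD : 1 ≤ D)
    (ps pt : ℝ) (hps : ps ∈ Set.Icc (0 : ℝ) 1) (hpt : pt ∈ Set.Icc (0 : ℝ) 1)
    (w : ℕ → ℕ) (S : ℕ → Ω → Bool) (B C : ℕ → ℕ → Ω → Bool)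
    (hSmeas : ∀ i, Measurable (S i))
    (hBmeas : ∀ i j, Measurable (B i j))
    (hCmeas : ∀ i k, Measurable (C i k))
    (hS : ∀ i < m, μ {ω | S i ω = true} = ENNReal.ofReal ps)
    (hB : ∀ i < m, ∀ j < w i, μ {ω | B i j ω = true} = ENNReal.ofReal pt)
    (hC : ∀ i < m, ∀ k < D - 1, μ {ω | C i k ω = true} = ENNReal.ofReal pt)
    (hindep : iIndepFun
      (Sum.elim (fun i : {i : ℕ // i < m} => S i.1)
        (Sum.elim
          (fun p : {p : ℕ × ℕ // p.1 < m ∧ p.2 < w p.1} => B p.1.1 p.1.2)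
          (fun p : {p : ℕ × ℕ // p.1 < m ∧ p.2 < D - 1} => C p.1.1 p.1.2))) μ) :
    (∑ i ∈ Finset.Icc 1 m, ps ^ i) + 1 ≤ ∫ ω, (tau m D w S B C ω : ℝ) ∂μ ∧
    ((∀ i < m, w i = 0) →
      (∫ ω, (tau m D w S B C ω : ℝ) ∂μ) = (∑ i ∈ Finset.Icc 1 m, ps ^ i) + 1) := by
  classical
  set L : Ω → ℕ := fun ω => runLen (fun i => S i ω) m with hLdef
  have hLmeas : Measurable L := measurable_runLen hSmeas m
  have hLle : ∀ ω, L ω ≤ m := fun ω => runLen_le _ m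
  -- the events `T l`
  set T : ℕ → Set Ω := fun l => {ω | ∀ i < l, S i ω = true} with hTdef
  have hTmeas : ∀ l, MeasurableSet (T l) := by
    intro l
    have : T l = ⋂ i ∈ Finset.range l, (S i) ⁻¹' {true} := by
      ext ω; simp [hTdef]
    rw [this]
    exact Finset.measurableSet_biInter _ fun i _ => (hSmeas i) (measurableSet_singleton true)
  -- probability of `T l`
  have hTprob : ∀ l ≤ m, μ (T l) = ENNReal.ofReal (ps ^ l) := by
    intro l hl
    set ι := {i : ℕ // i < m} ⊕
      ({p : ℕ × ℕ // p.1 < m ∧ p.2 < w p.1} ⊕ {p : ℕ × ℕ // p.1 < m ∧ p.2 < D - 1}) with hι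
    set F : Fin l → ι := fun i => Sum.inl ⟨i.1, lt_of_lt_of_le i.2 hl⟩ with hF
    have hinj : Function.Injective F := by
      intro a b hab
      simp only [hF] at hab
      exact Fin.ext (congrArg Subtype.val (Sum.inl_injective hab))
    set s : ι → Set Ω := Sum.elim (fun i => (S i.1) ⁻¹' {true}) (fun _ => Set.univ) with hs
    have key := hindep.meas_biInter (S := Finset.univ.image F) (s := s)
      (fun x hx => ?_)
    · have h1 : (⋂ x ∈ Finset.univ.image F, s x) = T l := by
        ext ω
        simp only [Set.mem_iInter, Finset.mem_image, Finset.mem_univ, true_and, hTdef,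
          Set.mem_setOf_eq]
        constructor
        · intro h i hi
          have := h (F ⟨i, hi⟩) ⟨⟨i, hi⟩, rfl⟩
          simpa [hs, hF] using this
        · rintro h x ⟨i, rfl⟩
          simpa [hs, hF] using h i.1 i.2
      have h2 : (∏ x ∈ Finset.univ.image F, μ (s x)) = ENNReal.ofReal (ps ^ l) := by
        rw [Finset.prod_image (fun a _ b _ h => hinj h)]
        have : ∀ i : Fin l, μ (s (F i)) = ENNReal.ofReal ps := by
          intro i
          have : s (F i) = {ω | S i.1 ω = true} := by
            ext ω; simp [hs, hF]
          rw [this]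
          exact hS i.1 (lt_of_lt_of_le i.2 hl)
        rw [Finset.prod_congr rfl (fun i _ => this i), Finset.prod_const,
          Finset.card_univ, Fintype.card_fin, ← ENNReal.ofReal_pow hps.1]
      rw [h1, h2] at key
      exact key
    · -- measurability in the comap σ-algebra
      simp only [Finset.mem_image, Finset.mem_univ, true_and] at hx
      obtain ⟨i, rfl⟩ := hx
      exact ⟨{true}, trivial, rfl⟩
  -- pointwise representation of `L` as a sum of indicators
  have hrep : ∀ ω, (L ω : ℝ) = ∑ l ∈ Finset.Icc 1 m, (T l).indicator (fun _ => (1 : ℝ)) ω := by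
    intro ω
    have hmem : ∀ l ≤ m, (ω ∈ T l ↔ l ≤ L ω) := by
      intro l hl
      exact ((le_runLen_iff hl).symm : (∀ i < l, S i ω = true) ↔ l ≤ L ω)
    calc (L ω : ℝ) = ∑ l ∈ Finset.Icc 1 m, (if l ≤ L ω then (1 : ℝ) else 0) := by
          rw [Finset.sum_boole]
          have : (Finset.Icc 1 m).filter (fun l => l ≤ L ω) = Finset.Icc 1 (L ω) := by
            ext l
            simp only [Finset.mem_filter, Finset.mem_Icc]
            have := hLle ω
            omega
          rw [this]
          simp [Nat.card_Icc]
      _ = _ := by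
          refine (Finset.sum_congr rfl fun l hl => ?_).symm
          rw [Set.indicator_apply, if_congr (hmem l (Finset.mem_Icc.mp hl).2) rfl rfl]
  -- integral of L
  have hLintegrable : Integrable (fun ω => (L ω : ℝ)) μ := by
    refine (integrable_finset_sum (Finset.Icc 1 m)
      (fun l _ => (integrable_const (1 : ℝ)).indicator (hTmeas l))).congr
      (Filter.Eventually.of_forall fun ω => ?_)
    exact (hrep ω).symm
  have hintL : ∫ ω, (L ω : ℝ) ∂μ = ∑ l ∈ Finset.Icc 1 m, ps ^ l := by
    calc ∫ ω, (L ω : ℝ) ∂μ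
        = ∫ ω, ∑ l ∈ Finset.Icc 1 m, (T l).indicator (fun _ => (1 : ℝ)) ω ∂μ :=
          integral_congr_ae (Filter.Eventually.of_forall hrep)
      _ = ∑ l ∈ Finset.Icc 1 m, ∫ ω, (T l).indicator (fun _ => (1 : ℝ)) ω ∂μ :=
          integral_finset_sum _ (fun l _ => (integrable_const (1 : ℝ)).indicator (hTmeas l))
      _ = ∑ l ∈ Finset.Icc 1 m, ps ^ l := by
          refine Finset.sum_congr rfl fun l hl => ?_
          rw [integral_indicator_const (1 : ℝ) (hTmeas l), measureReal_def, hTprob l (Finset.mem_Icc.mp hl).2,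
            smul_eq_mul, mul_one, ENNReal.toReal_ofReal (pow_nonneg hps.1 l)]
  have hL1int : Integrable (fun ω => (L ω : ℝ) + 1) μ :=
    hLintegrable.add (integrable_const 1)
  have hintL1 : ∫ ω, ((L ω : ℝ) + 1) ∂μ = (∑ l ∈ Finset.Icc 1 m, ps ^ l) + 1 := by
    rw [integral_add hLintegrable (integrable_const 1), hintL, integral_const]
    simp
  have hLrw : ∀ ω, runLen (fun i => S i ω) m = L ω := fun _ => rfl
  -- measurability of tau
  have htau_eq : ∀ ω, tau m D w S B C ω = L ω + 1 + ∑ l ∈ Finset.range m,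
      if L ω = l then (if ∃ j < w l, B l j ω = true then
        1 + runLen (fun k => C l k ω) (D - 1) else 0) else 0 := by
    intro ω
    simp only [tau, hLrw]
    by_cases h : L ω = m
    · rw [if_pos h, Finset.sum_eq_zero (fun l hl => ?_), add_zero]
      rw [if_neg]
      intro hc
      rw [h] at hc
      exact absurd (Finset.mem_range.mp hl) (by omega)
    · rw [if_neg h, Finset.sum_ite_eq (Finset.range m) (L ω),
        if_pos (Finset.mem_range.mpr (lt_of_le_of_ne (hLle ω) h))]
  have htaumeas : Measurable (fun ω => tau m D w S B C ω) := by
    have he : ∀ l, Measurable (fun ω => if ∃ j < w l, B l j ω = true then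
        1 + runLen (fun k => C l k ω) (D - 1) else 0) := by
      intro l
      refine Measurable.ite ?_ (measurable_const.add (measurable_runLen (hCmeas l) (D - 1)))
        measurable_const
      have : {ω : Ω | ∃ j < w l, B l j ω = true} =
          ⋃ j ∈ Finset.range (w l), (B l j) ⁻¹' {true} := by
        ext ω; simp
      rw [this]
      exact Finset.measurableSet_biUnion _ fun j _ => (hBmeas l j) (measurableSet_singleton true)
    have : (fun ω => tau m D w S B C ω) = fun ω => L ω + 1 + ∑ l ∈ Finset.range m,
        if L ω = l then (if ∃ j < w l, B l j ω = true then
          1 + runLen (fun k => C l k ω) (D - 1) else 0) else 0 := funext htau_eq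
    rw [this]
    exact (hLmeas.add_const 1).add (Finset.measurable_sum _ fun l _ =>
      Measurable.ite (hLmeas (measurableSet_singleton l)) (he l) measurable_const)
  have htau_le : ∀ ω, tau m D w S B C ω ≤ m + 2 + D := by
    intro ω
    have h1 := hLle ω
    simp only [tau, hLrw]
    split_ifs with h h'
    · omega
    · have := runLen_le (fun k => C (L ω) k ω) (D - 1)
      omega
    · omega
  have htauR : Measurable (fun ω => (tau m D w S B C ω : ℝ)) :=
    (measurable_of_countable (Nat.cast : ℕ → ℝ)).comp htaumeas
  have htauint : Integrable (fun ω => (tau m D w S B C ω : ℝ)) μ := by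
    refine (integrable_const ((m + 2 + D : ℕ) : ℝ)).mono' htauR.aestronglyMeasurable
      (Filter.Eventually.of_forall fun ω => ?_)
    rw [Real.norm_eq_abs, abs_of_nonneg (by positivity)]
    exact_mod_cast htau_le ω
  have hge : ∀ ω, (L ω : ℝ) + 1 ≤ (tau m D w S B C ω : ℝ) := by
    intro ω
    have : L ω + 1 ≤ tau m D w S B C ω := by
      simp only [tau, hLrw]
      split_ifs <;> omega
    exact_mod_cast this
  constructor
  · rw [← hintL1]
    exact integral_mono hL1int htauint hge
  · intro hw
    have : (fun ω => (tau m D w S B C ω : ℝ)) = fun ω => (L ω : ℝ) + 1 := by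
      funext ω
      have : tau m D w S B C ω = L ω + 1 := by
        simp only [tau, hLrw]
        by_cases h : L ω = m
        · rw [if_pos h]
        · rw [if_neg h, if_neg, add_zero]
          rintro ⟨j, hj, -⟩
          rw [hw (L ω) (lt_of_le_of_ne (hLle ω) h)] at hj
          omega
      rw [this]
      push_cast
      ring
    rw [this, hintL1]
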